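/- Let D be a nondeterministic planning domain over fluents F, Γ = (D, s₀, φ) a FOND planning problem with PPLTL goal φ, and Γ' = (D', s₀', G') the compiled FOND planning problem. A strategy π for D is a strong solution to Γ (every execution of π from s₀ is finite and its trace satisfies φ) if and only if the strategy π' for D' defined on compiled histories by π'((s₀,σ₋₁)(s₁,σ'₁)⋯(sₙ,σ'ₙ)) = π(s₀ s₁ ⋯ sₙ) is a strong solution to Γ' (every execution of π' from s₀' is finite and ends in a compiled state satisfying G'). Consequently Γ has a strong solution if and only if Γ' has a strong solution. -/
import Mathlib


inductive PPLTL (P : Type) : Type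
  | atom : P → PPLTL P
  | neg : PPLTL P → PPLTL P
  | conj : PPLTL P → PPLTL P → PPLTL P
  | yesterday : PPLTL P → PPLTL P
  | since : PPLTL P → PPLTL P → PPLTL P
  deriving DecidableEq

namespace PPLTL

variable {P : Type}

/-- Satisfaction of a pure-past LTL formula on the trace `τ` at instant `i`. -/
def Sat (τ : ℕ → Set P) : PPLTL P → ℕ → Prop
  | atom p, i => p ∈ τ i
  | neg φ, i => ¬ Sat τ φ i
  | conj φ ψ, i => Sat τ φ i ∧ Sat τ ψ i
  | yesterday φ, i => 1 ≤ i ∧ Sat τ φ (i - 1)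
  | since φ ψ, i => ∃ k, k ≤ i ∧ Sat τ ψ k ∧ ∀ j, k < j → j ≤ i → Sat τ φ j

/-- Disjunction abbreviation. -/
def por (φ ψ : PPLTL P) : PPLTL P := neg (conj (neg φ) (neg ψ))

/-- Previous normal form transformation. -/
def pnf : PPLTL P → PPLTL P
  | atom p => atom p
  | neg φ => neg (pnf φ)
  | conj φ ψ => conj (pnf φ) (pnf ψ)
  | yesterday φ => yesterday φ
  | since φ ψ => por (pnf ψ) (conj (pnf φ) (yesterday (since φ ψ)))

/-- The set of subformulas of a formula. -/
def sub [DecidableEq P] : PPLTL P → Finset (PPLTL P)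
  | atom p => {atom p}
  | neg φ => insert (neg φ) (sub φ)
  | conj φ ψ => insert (conj φ ψ) (sub φ ∪ sub ψ)
  | yesterday φ => insert (yesterday φ) (sub φ)
  | since φ ψ => insert (since φ ψ) (sub φ ∪ sub ψ)


/-- The predicate `val(ϕ, σ, s)`: truth of ϕ given the interpretation `σ`
over the quoted subformulas Σφ (modelled as a predicate on formulas) and the
current propositional interpretation `s`. -/
def val (σ : PPLTL P → Prop) (s : Set P) : PPLTL P → Prop
  | atom p => p ∈ s
  | neg φ => ¬ val σ s φ
  | conj φ ψ => val σ s φ ∧ val σ s ψ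
  | yesterday φ => σ φ
  | since φ ψ => val σ s ψ ∨ (val σ s φ ∧ σ (since φ ψ))

/-- The interpretation `σ₋₁` assigning ⊥ to every quoted proposition. -/
def sigmaInit : PPLTL P → Prop := fun _ => False

end PPLTL

/-- A (possibly nondeterministic) planning domain with states `S` and
actions `A`. -/
structure Domain (S A : Type) where
  applicable : S → A → Prop
  tr : S → A → Set S

/-- The compiled domain `D'`: states are pairs of a fluent state and an
interpretation of the quoted subformulas; actions and applicability are
unchanged; the Σφ-component is deterministically updated by
`σ'(«ϕ») = val(ϕ, σ, s)`, identically for every action. -/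
def Domain.compiled {F A : Type} (D : Domain (Set F) A) :
    Domain (Set F × (PPLTL F → Prop)) A where
  applicable := fun p a => D.applicable p.1 a
  tr := fun p a => {q | q.1 ∈ D.tr p.1 a ∧ q.2 = fun ϕ => PPLTL.val p.2 p.1 ϕ}

namespace Domain

variable {S A : Type}

/-- The finite histories (stored with the most recent state first) generated
by following the strategy `π` from `s₀`. -/
inductive Run (D : Domain S A) (π : List S → Option A) (s₀ : S) : List S → Prop
  | init : Run D π s₀ [s₀]
  | step {h : List S} {s s' : S} {a : A} :
      Run D π s₀ (s :: h) → π (s :: h) = some a → s' ∈ D.tr s a →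
      Run D π s₀ (s' :: s :: h)

/-- The history `sᵢ ⋯ s₀` (most recent first) of the state sequence `e`. -/
def histUpTo (e : ℕ → S) (i : ℕ) : List S := ((List.range (i + 1)).map e).reverse

/-- An infinite execution of the strategy `π` from `s₀`. -/
def InfExec (D : Domain S A) (π : List S → Option A) (s₀ : S) (e : ℕ → S) : Prop :=
  e 0 = s₀ ∧ ∀ i, ∃ a, π (histUpTo e i) = some a ∧ e (i + 1) ∈ D.tr (e i) a

/-- `π` is a strong solution: it is a strategy (applicable whenever defined),
every maximal finite execution (one ending where `π` is undefined) reaches the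
goal, and there is no infinite execution. -/
def StrongSolution (D : Domain S A) (π : List S → Option A) (s₀ : S)
    (goal : List S → Prop) : Prop :=
  (∀ (h : List S) (s : S) (a : A), π (s :: h) = some a → D.applicable s a) ∧
  (∀ h, Run D π s₀ h → π h = none → goal h) ∧
  ¬ ∃ e : ℕ → S, InfExec D π s₀ e

end Domain

/-- A history (most recent state first) satisfies the PPLTL formula φ:
its induced trace satisfies φ at the last instant. -/
def HistSat {F : Type} (φ : PPLTL F) (h : List (Set F)) : Prop :=
  PPLTL.Sat (fun i => h.reverse.getD i ∅) φ (h.length - 1)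

/-- A compiled history ends in a state satisfying the reachability goal `G'`,
i.e. its last (most recent) compiled state `(s, σ)` satisfies `val(φ, σ, s)`. -/
def CompiledGoal {F : Type} (φ : PPLTL F) (h : List (Set F × (PPLTL F → Prop))) : Prop :=
  ∀ p t, h = p :: t → PPLTL.val p.2 p.1 φ

section Aux

open PPLTL

variable {F A : Type}

/-- The trace induced by a most-recent-first history. -/
def trace' (h : List (Set F)) : ℕ → Set F := fun i => h.reverse.getD i ∅

/-- The Σφ-interpretation at the most recent state of a history. -/
def sig : List (Set F) → (PPLTL F → Prop)
  | [] => PPLTL.sigmaInit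
  | [_] => PPLTL.sigmaInit
  | _ :: s :: t => fun ϕ => PPLTL.val (sig (s :: t)) s ϕ

/-- Augment a history with the Σφ-interpretations. -/
def aug : List (Set F) → List (Set F × (PPLTL F → Prop))
  | [] => []
  | s :: t => (s, sig (s :: t)) :: aug t

lemma aug_map_fst (h : List (Set F)) : (aug h).map Prod.fst = h := by
  induction h with
  | nil => rfl
  | cons s t ih => simp [aug, ih]

lemma sat_congr {P : Type} {τ τ' : ℕ → Set P} (ϕ : PPLTL P) :
    ∀ i, (∀ j, j ≤ i → τ j = τ' j) → (PPLTL.Sat τ ϕ i ↔ PPLTL.Sat τ' ϕ i) := by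
  induction ϕ with
  | atom p => intro i h; simp [PPLTL.Sat, h i le_rfl]
  | neg φ ih => intro i h; simp [PPLTL.Sat, ih i h]
  | conj φ ψ ih1 ih2 => intro i h; simp [PPLTL.Sat, ih1 i h, ih2 i h]
  | yesterday φ ih =>
      intro i h
      simp only [PPLTL.Sat]
      exact and_congr_right fun _ =>
        ih (i - 1) (fun j hj => h j (le_trans hj (Nat.sub_le _ _)))
  | since φ ψ ih1 ih2 =>
      intro i h
      simp only [PPLTL.Sat]
      refine exists_congr fun k => and_congr_right fun hk =>
        and_congr (ih2 k fun j hj => h j (le_trans hj hk))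
          (forall_congr' fun j => ?_)
      by_cases hji : j ≤ i
      · simp only [hji]
        exact imp_congr_right fun _ => imp_congr_right fun _ => ih1 j fun j' hj' => h j' (le_trans hj' hji)
      · constructor <;> intro hh h1 h2 <;> exact absurd h2 hji

lemma trace'_cons_lt (s : Set F) (t : List (Set F)) {j : ℕ} (hj : j < t.length) :
    trace' (s :: t) j = trace' t j := by
  simp only [trace', List.reverse_cons]
  rw [List.getD_append]
  simpa using hj

lemma trace'_last (s : Set F) (t : List (Set F)) : trace' (s :: t) t.length = s := by
  simp only [trace', List.reverse_cons]
  rw [List.getD_append_right _ _ _ _ (by simp)]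
  simp

lemma sat_since_zero {P : Type} (τ : ℕ → Set P) (ϕ ψ : PPLTL P) :
    PPLTL.Sat τ (since ϕ ψ) 0 ↔ PPLTL.Sat τ ψ 0 := by
  simp only [PPLTL.Sat]
  constructor
  · rintro ⟨k, hk, h1, -⟩
    interval_cases k
    exact h1
  · intro h; exact ⟨0, le_rfl, h, fun j h1 h2 => by omega⟩

lemma sat_since_succ {P : Type} (τ : ℕ → Set P) (ϕ ψ : PPLTL P) (n : ℕ) :
    PPLTL.Sat τ (since ϕ ψ) (n + 1) ↔
      PPLTL.Sat τ ψ (n + 1) ∨ (PPLTL.Sat τ ϕ (n + 1) ∧ PPLTL.Sat τ (since ϕ ψ) n) := by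
  simp only [PPLTL.Sat]
  constructor
  · rintro ⟨k, hk, h1, h2⟩
    rcases eq_or_lt_of_le hk with rfl | hk'
    · exact Or.inl h1
    · refine Or.inr ⟨h2 (n+1) (by omega) le_rfl,
        ⟨k, by omega, h1, fun j hj1 hj2 => h2 j hj1 (by omega)⟩⟩
  · rintro (h | ⟨hϕ, k, hk, h1, h2⟩)
    · exact ⟨n + 1, le_rfl, h, fun j hj1 hj2 => by omega⟩
    · refine ⟨k, by omega, h1, fun j hj1 hj2 => ?_⟩
      rcases eq_or_lt_of_le hj2 with rfl | hj'
      · exact hϕ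
      · exact h2 j hj1 (by omega)

/-- Main semantic lemma: `val(ϕ, σ, s)` with the computed `σ` coincides with
trace satisfaction at the last instant. -/
lemma val_sig_iff_sat :
    ∀ (t : List (Set F)) (s : Set F) (ϕ : PPLTL F),
      PPLTL.val (sig (s :: t)) s ϕ ↔ PPLTL.Sat (trace' (s :: t)) ϕ t.length := by
  intro t
  induction t with
  | nil =>
    intro s ϕ
    induction ϕ with
    | atom p =>
        simp only [PPLTL.val, PPLTL.Sat]
        simp only [List.length_nil]
        rw [show trace' [s] 0 = s from trace'_last s []]
    | neg φ ih => simp [PPLTL.val, PPLTL.Sat, ih]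
    | conj φ ψ ih1 ih2 => simp [PPLTL.val, PPLTL.Sat, ih1, ih2]
    | yesterday φ ih => simp [PPLTL.val, PPLTL.Sat, sig, PPLTL.sigmaInit]
    | since φ ψ ih1 ih2 =>
        rw [show (List.length ([] : List (Set F))) = 0 from rfl, sat_since_zero]
        simp only [PPLTL.val, sig, PPLTL.sigmaInit, and_false, or_false]
        exact ih2
  | cons s' t' ih =>
    intro s ϕ
    induction ϕ with
    | atom p =>
        simp only [PPLTL.val, PPLTL.Sat]
        rw [show (s' :: t').length = t'.length + 1 from rfl,
          show trace' (s :: s' :: t') (t'.length + 1) = s from trace'_last s (s' :: t')]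
    | neg φ ihf => simp only [PPLTL.val, PPLTL.Sat]; rw [ihf]
    | conj φ ψ ih1 ih2 => simp only [PPLTL.val, PPLTL.Sat]; rw [ih1, ih2]
    | yesterday φ ihf =>
        simp only [PPLTL.val, PPLTL.Sat]
        have h1 : sig (s :: s' :: t') φ = PPLTL.val (sig (s' :: t')) s' φ := rfl
        rw [h1, ih s' φ]
        have h2 : (s' :: t').length = t'.length + 1 := rfl
        rw [h2]
        simp only [Nat.le_add_left, true_and, Nat.add_sub_cancel]
        exact sat_congr φ t'.length fun j hj =>
          (trace'_cons_lt s (s' :: t') (by simp; omega)).symm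
    | since φ ψ ih1 ih2 =>
        have hlen : (s' :: t').length = t'.length + 1 := rfl
        rw [hlen, sat_since_succ]
        simp only [PPLTL.val]
        rw [ih1, ih2, hlen]
        have h1 : sig (s :: s' :: t') (since φ ψ) = PPLTL.val (sig (s' :: t')) s' (since φ ψ) := rfl
        have h3 : PPLTL.Sat (trace' (s' :: t')) (since φ ψ) t'.length ↔
            PPLTL.Sat (trace' (s :: s' :: t')) (since φ ψ) t'.length :=
          sat_congr _ t'.length fun j hj =>
            (trace'_cons_lt s (s' :: t') (by simp; omega)).symm
        rw [h1, ih s' (since φ ψ), h3]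

end Aux

section Aux2

open PPLTL

variable {F A : Type}

lemma run_nonempty {S : Type} {D : Domain S A} {π : List S → Option A} {s₀ : S} {h : List S}
    (hr : Domain.Run D π s₀ h) : ∃ s t, h = s :: t := by
  cases hr with
  | init => exact ⟨s₀, [], rfl⟩
  | step _ _ _ => exact ⟨_, _, rfl⟩

lemma mem_compiled_tr {D : Domain (Set F) A} {p q : Set F × (PPLTL F → Prop)} {a : A} :
    q ∈ D.compiled.tr p a ↔ q.1 ∈ D.tr p.1 a ∧ q.2 = fun ϕ => PPLTL.val p.2 p.1 ϕ :=
  Iff.rfl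

lemma sig_cons_cons (s s' : Set F) (t : List (Set F)) :
    sig (s' :: s :: t) = fun ϕ => PPLTL.val (sig (s :: t)) s ϕ := rfl

lemma run_aug {D : Domain (Set F) A} {π : List (Set F) → Option A}
    {π' : List (Set F × (PPLTL F → Prop)) → Option A}
    (hπ : ∀ h, π h = π' (aug h)) {s₀ : Set F} {h : List (Set F)}
    (hr : Domain.Run D π s₀ h) :
    Domain.Run D.compiled π' (s₀, PPLTL.sigmaInit) (aug h) := by
  induction hr with
  | init =>
      have : aug [s₀] = [((s₀ : Set F), PPLTL.sigmaInit)] := rfl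
      rw [this]
      exact Domain.Run.init
  | @step h s s' a hr ha htr ih =>
      have : aug (s' :: s :: h) = (s', sig (s' :: s :: h)) :: aug (s :: h) := rfl
      rw [this]
      have haug : aug (s :: h) = (s, sig (s :: h)) :: aug h := rfl
      rw [haug] at ih ⊢
      refine Domain.Run.step (a := a) ih ?_ ?_
      · rw [← haug, ← hπ]; exact ha
      · exact ⟨htr, sig_cons_cons s s' h⟩

lemma run_compiled_inv {D : Domain (Set F) A} {π : List (Set F) → Option A}
    {s₀ : Set F} {h' : List (Set F × (PPLTL F → Prop))}
    (hr : Domain.Run D.compiled (fun h' => π (h'.map Prod.fst)) (s₀, PPLTL.sigmaInit) h') :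
    h' = aug (h'.map Prod.fst) ∧ Domain.Run D π s₀ (h'.map Prod.fst) := by
  induction hr with
  | init => exact ⟨rfl, Domain.Run.init⟩
  | @step t p q a hr ha htr ih =>
      obtain ⟨heq, hrun⟩ := ih
      obtain ⟨htr1, htr2⟩ := htr
      have hmap : (q :: p :: t).map Prod.fst = q.1 :: p.1 :: (t.map Prod.fst) := rfl
      have hp2 : p.2 = sig (p.1 :: t.map Prod.fst) := by
        have := congrArg (fun l => l.headI) heq
        simp only [aug, List.map_cons, List.headI] at this
        exact congrArg Prod.snd this
      constructor
      · rw [hmap]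
        show q :: p :: t = (q.1, sig (q.1 :: p.1 :: t.map Prod.fst)) :: aug (p.1 :: t.map Prod.fst)
        rw [List.map_cons] at heq
        rw [← heq]
        congr 1
        have : sig (q.1 :: p.1 :: t.map Prod.fst) = fun ϕ => PPLTL.val p.2 p.1 ϕ := by
          rw [sig_cons_cons, hp2]
        rw [this, ← htr2]
      · rw [hmap]
        exact Domain.Run.step hrun ha htr1

/-- The Σφ-interpretation sequence along an infinite execution. -/
def sigE (e : ℕ → Set F) : ℕ → (PPLTL F → Prop)
  | 0 => PPLTL.sigmaInit
  | i + 1 => fun ϕ => PPLTL.val (sigE e i) (e i) ϕ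

lemma histUpTo_zero {S : Type} (e : ℕ → S) : Domain.histUpTo e 0 = [e 0] := rfl

lemma histUpTo_succ {S : Type} (e : ℕ → S) (i : ℕ) :
    Domain.histUpTo e (i + 1) = e (i + 1) :: Domain.histUpTo e i := by
  simp [Domain.histUpTo, List.range_succ]

lemma histUpTo_map {S T : Type} (f : S → T) (e : ℕ → S) (i : ℕ) :
    (Domain.histUpTo e i).map f = Domain.histUpTo (fun j => f (e j)) i := by
  simp [Domain.histUpTo, List.map_reverse, List.map_map, Function.comp]

lemma sig_histUpTo (e : ℕ → Set F) (i : ℕ) : sig (Domain.histUpTo e i) = sigE e i := by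
  induction i with
  | zero => rfl
  | succ i ih =>
      rw [histUpTo_succ]
      cases i with
      | zero => rw [histUpTo_zero]; rw [histUpTo_zero] at ih; exact congrArg (fun σ => fun ϕ => PPLTL.val σ (e 0) ϕ) ih
      | succ n =>
          rw [histUpTo_succ] at ih ⊢
          rw [sig_cons_cons]
          rw [ih]
          rfl

lemma aug_histUpTo (e : ℕ → Set F) (i : ℕ) :
    aug (Domain.histUpTo e i) = Domain.histUpTo (fun j => (e j, sigE e j)) i := by
  induction i with
  | zero => rfl
  | succ i ih =>
      rw [histUpTo_succ, histUpTo_succ]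
      show (e (i+1), sig (e (i+1) :: Domain.histUpTo e i)) :: aug (Domain.histUpTo e i)
        = (e (i+1), sigE e (i+1)) :: Domain.histUpTo (fun j => (e j, sigE e j)) i
      rw [ih]
      congr 1
      have : e (i+1) :: Domain.histUpTo e i = Domain.histUpTo e (i+1) := (histUpTo_succ e i).symm
      rw [this, sig_histUpTo]

lemma infexec_aug {D : Domain (Set F) A} {π : List (Set F) → Option A}
    {π' : List (Set F × (PPLTL F → Prop)) → Option A}
    (hπ : ∀ h, π h = π' (aug h)) {s₀ : Set F} {e : ℕ → Set F}
    (he : Domain.InfExec D π s₀ e) :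
    Domain.InfExec D.compiled π' (s₀, PPLTL.sigmaInit) (fun j => (e j, sigE e j)) := by
  obtain ⟨h0, hstep⟩ := he
  refine ⟨by simp [h0, sigE], fun i => ?_⟩
  obtain ⟨a, ha, htr⟩ := hstep i
  refine ⟨a, ?_, ?_, ?_⟩
  · rw [← aug_histUpTo, ← hπ]; exact ha
  · exact htr
  · rfl

lemma infexec_compiled_inv {D : Domain (Set F) A} {π : List (Set F) → Option A}
    {s₀ : Set F} {e' : ℕ → Set F × (PPLTL F → Prop)}
    (he : Domain.InfExec D.compiled (fun h' => π (h'.map Prod.fst)) (s₀, PPLTL.sigmaInit) e') :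
    Domain.InfExec D π s₀ (fun j => (e' j).1) := by
  obtain ⟨h0, hstep⟩ := he
  refine ⟨by simp [h0], fun i => ?_⟩
  obtain ⟨a, ha, htr⟩ := hstep i
  refine ⟨a, ?_, htr.1⟩
  rw [← histUpTo_map Prod.fst e' i]
  exact ha

lemma compiledGoal_aug_iff (φ : PPLTL F) (s : Set F) (t : List (Set F)) :
    CompiledGoal φ (aug (s :: t)) ↔ HistSat φ (s :: t) := by
  have h1 : aug (s :: t) = (s, sig (s :: t)) :: aug t := rfl
  have h2 : HistSat φ (s :: t) ↔ PPLTL.val (sig (s :: t)) s φ := by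
    rw [val_sig_iff_sat]
    rfl
  rw [h2]
  constructor
  · intro hg; exact hg (s, sig (s :: t)) (aug t) h1
  · rintro hv p t' hpt
    rw [h1] at hpt
    cases hpt
    exact hv

end Aux2

/-- A strategy `π` is a strong solution to `Γ = (D, s₀, φ)`
iff the strategy `π'` defined on compiled histories by
`π'((s₀,σ₋₁)(s₁,σ'₁)⋯(sₙ,σ'ₙ)) = π(s₀ s₁ ⋯ sₙ)` is a strong solution to the
compiled problem `Γ' = (D', (s₀,σ₋₁), G')`; consequently `Γ` has a strong
solution iff `Γ'` has one. -/
theorem strong_solution_iff_compiled {F A : Type} (D : Domain (Set F) A)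
    (hne : ∀ s a, D.applicable s a → (D.tr s a).Nonempty)
    (φ : PPLTL F) (s₀ : Set F) :
    (∀ π : List (Set F) → Option A,
        Domain.StrongSolution D π s₀ (HistSat φ) ↔
          Domain.StrongSolution D.compiled (fun h' => π (h'.map Prod.fst))
            (s₀, PPLTL.sigmaInit) (CompiledGoal φ)) ∧
    ((∃ π : List (Set F) → Option A, Domain.StrongSolution D π s₀ (HistSat φ)) ↔
      ∃ π' : List (Set F × (PPLTL F → Prop)) → Option A,
        Domain.StrongSolution D.compiled π' (s₀, PPLTL.sigmaInit) (CompiledGoal φ)) := by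
  have main : ∀ π : List (Set F) → Option A,
      Domain.StrongSolution D π s₀ (HistSat φ) ↔
        Domain.StrongSolution D.compiled (fun h' => π (h'.map Prod.fst))
          (s₀, PPLTL.sigmaInit) (CompiledGoal φ) := by
    intro π
    have hπ : ∀ h, π h = (fun h' : List (Set F × (PPLTL F → Prop)) => π (h'.map Prod.fst)) (aug h) := by
      intro h; simp [aug_map_fst]
    constructor
    · rintro ⟨happ, hgoal, hinf⟩
      refine ⟨?_, ?_, ?_⟩
      · intro h' p a ha
        exact happ (h'.map Prod.fst) p.1 a ha
      · intro h' hr hnone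
        obtain ⟨heq, hrun⟩ := run_compiled_inv hr
        obtain ⟨s, t, hst⟩ := run_nonempty hrun
        have hg := hgoal _ hrun hnone
        rw [heq, hst]
        rw [hst] at hg
        exact (compiledGoal_aug_iff φ s t).2 hg
      · rintro ⟨e', he'⟩
        exact hinf ⟨_, infexec_compiled_inv he'⟩
    · rintro ⟨happ, hgoal, hinf⟩
      refine ⟨?_, ?_, ?_⟩
      · intro h s a ha
        have ha' : (fun h' : List (Set F × (PPLTL F → Prop)) => π (h'.map Prod.fst))
            ((s, sig (s :: h)) :: aug h) = some a := by
          show π (((s, sig (s :: h)) :: aug h).map Prod.fst) = some a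
          have hm : ((s, sig (s :: h)) :: aug h).map Prod.fst = s :: h := by
            simp [aug_map_fst]
          rw [hm]; exact ha
        exact happ (aug h) (s, sig (s :: h)) a ha'
      · intro h hr hnone
        have hr' := run_aug (π' := fun h' => π (h'.map Prod.fst)) hπ hr
        obtain ⟨s, t, hst⟩ := run_nonempty hr
        have hg := hgoal _ hr' (by rw [← hπ h]; exact hnone)
        rw [hst] at hg ⊢
        exact (compiledGoal_aug_iff φ s t).1 hg
      · rintro ⟨e, he⟩
        exact hinf ⟨_, infexec_aug (π' := fun h' => π (h'.map Prod.fst)) hπ he⟩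
  refine ⟨main, ?_, ?_⟩
  · rintro ⟨π, h⟩
    exact ⟨_, (main π).1 h⟩
  · rintro ⟨π', happ, hgoal, hinf⟩
    refine ⟨fun h => π' (aug h), ?_, ?_, ?_⟩
    · intro h s a ha
      exact happ (aug h) (s, sig (s :: h)) a ha
    · intro h hr hnone
      have hr' := run_aug (π' := π') (fun h => rfl) hr
      obtain ⟨s, t, hst⟩ := run_nonempty hr
      have hg := hgoal _ hr' hnone
      rw [hst] at hg ⊢
      exact (compiledGoal_aug_iff φ s t).1 hg
    · rintro ⟨e, he⟩
      exact hinf ⟨_, infexec_aug (fun h => rfl) he⟩
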